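/- Let S be a symmetric numerical semigroup with δ gaps and associated partition λ. Then λ is contained in the staircase partition (δ, δ-1, ..., 2, 1), i.e. λ_i ≤ δ + 1 - i for all i = 1,...,δ. -/

import Mathlib

/-- The partition associated to a symmetric numerical semigroup with
`δ` gaps is contained in the staircase `(δ, δ-1, …, 1)`: `λ_i ≤ δ + 1 - i`
(0-based: `lam i ≤ δ - i`). -/
theorem stmt_3 (S : Set ℕ) (h0 : 0 ∈ S)
    (hadd : ∀ a ∈ S, ∀ b ∈ S, a + b ∈ S)
    (hfin : Sᶜ.Finite) (δ : ℕ) (hδ : δ = hfin.toFinset.card)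
    (hsym : ∀ w : ℕ, (w ∉ S ↔ (2 * (δ : ℤ) - 1 - w) ∈ ((fun k : ℕ => (k : ℤ)) '' S)))
    (w : Fin δ → ℕ) (hmono : StrictMono w) (hrange : Set.range w = Sᶜ)
    (lam : Fin δ → ℕ)
    (hlam : ∀ i : Fin δ, lam i = w i.rev - ((δ - 1) - (i : ℕ))) :
    ∀ i : Fin δ, lam i ≤ δ - (i : ℕ) := by
  classical
  -- Key claim: the j-th gap satisfies `w j ≤ 2 * j + 1` (semigroup counting argument).
  have key : ∀ j : Fin δ, w j ≤ 2 * (j : ℕ) + 1 := by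
    intro j
    have hngap : w j ∉ S := by
      have : w j ∈ Set.range w := ⟨j, rfl⟩
      rw [hrange] at this
      exact this
    have hsum : ((Finset.range (w j + 1)).filter (fun x => x ∈ S)).card
        + ((Finset.range (w j + 1)).filter (fun x => ¬ x ∈ S)).card = w j + 1 := by
      rw [Finset.card_filter_add_card_filter_not]
      exact Finset.card_range (w j + 1)
    have hAsub : (Finset.range (w j + 1)).filter (fun x => ¬ x ∈ S)
        ⊆ Finset.image w (Finset.Iic j) := by
      intro x hx
      rw [Finset.mem_filter, Finset.mem_range] at hx
      obtain ⟨hx1, hx2⟩ := hx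
      have hx3 : x ∈ Sᶜ := hx2
      rw [← hrange] at hx3
      obtain ⟨k, hk⟩ := hx3
      refine Finset.mem_image.2 ⟨k, ?_, hk⟩
      rw [Finset.mem_Iic]
      exact hmono.le_iff_le.mp (by omega)
    have hAcard : ((Finset.range (w j + 1)).filter (fun x => ¬ x ∈ S)).card
        ≤ (j : ℕ) + 1 := by
      calc ((Finset.range (w j + 1)).filter (fun x => ¬ x ∈ S)).card
          ≤ (Finset.image w (Finset.Iic j)).card := Finset.card_le_card hAsub
        _ ≤ (Finset.Iic j).card := Finset.card_image_le
        _ = (j : ℕ) + 1 := by rw [Fin.card_Iic]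
    have hBA : ((Finset.range (w j + 1)).filter (fun x => x ∈ S)).card
        ≤ ((Finset.range (w j + 1)).filter (fun x => ¬ x ∈ S)).card := by
      apply Finset.card_le_card_of_injOn (fun s => w j - s)
      · intro s hs
        rw [Finset.mem_coe, Finset.mem_filter, Finset.mem_range] at hs
        obtain ⟨hs1, hs2⟩ := hs
        beta_reduce
        rw [Finset.mem_coe, Finset.mem_filter, Finset.mem_range]
        refine ⟨by omega, ?_⟩
        intro hcon
        have := hadd s hs2 (w j - s) hcon
        rw [show s + (w j - s) = w j by omega] at this
        exact hngap this
      · intro s hs t ht hst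
        simp only [Finset.mem_coe, Finset.mem_filter, Finset.mem_range] at hs ht
        have hst' : w j - s = w j - t := hst
        omega
    omega
  intro i
  have hi := i.isLt
  have hrev : (i.rev : ℕ) = δ - 1 - (i : ℕ) := by
    simp [Fin.rev]
    omega
  have hw := key i.rev
  rw [hlam i]
  omega
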